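/- arXiv:2209.12175 — 2 statements merged into one kernel-verified Lean document; each statement's English description precedes it below -/
import Mathlib

section
/- Let M be the (k+l)×(k+l) block matrix M = [[0, M₁],[M₂, 0]] with (M₁)ᵢⱼ = m₁(i)m₂(k+j), (M₂)ᵢⱼ = m₁(k+i)m₂(j), μ₁ = Σ_{i=1}^{k} m₁(i)m₂(i), μ₂ = Σ_{i=k+1}^{k+l} m₁(i)m₂(i). Then det(I + tM) = 1 − μ₁μ₂t² for every t ∈ ℂ. -/
open Matrix

theorem block_antidiagonal_det (k l : ℕ) (m₁ m₂ : Fin k ⊕ Fin l → ℂ)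
    (M₁ : Matrix (Fin k) (Fin l) ℂ) (hM₁ : ∀ i j, M₁ i j = m₁ (.inl i) * m₂ (.inr j))
    (M₂ : Matrix (Fin l) (Fin k) ℂ) (hM₂ : ∀ i j, M₂ i j = m₁ (.inr i) * m₂ (.inl j))
    (μ₁ μ₂ : ℂ)
    (hμ₁ : μ₁ = ∑ i : Fin k, m₁ (.inl i) * m₂ (.inl i))
    (hμ₂ : μ₂ = ∑ i : Fin l, m₁ (.inr i) * m₂ (.inr i))
    (t : ℂ) :
    (1 + t • Matrix.fromBlocks 0 M₁ M₂ 0).det = 1 - μ₁ * μ₂ * t ^ 2 := by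
  have h1 : (1 : Matrix (Fin k ⊕ Fin l) (Fin k ⊕ Fin l) ℂ) + t • fromBlocks 0 M₁ M₂ 0
      = fromBlocks 1 (t • M₁) (t • M₂) 1 := by
    ext i j
    cases i <;> cases j <;>
      simp [fromBlocks, Matrix.one_apply, Matrix.smul_apply]
  have h2 : (1 : Matrix (Fin k) (Fin k) ℂ) - (t • M₁) * (t • M₂)
      = 1 + (replicateCol Unit (fun i => -(t^2 * μ₂) * m₁ (Sum.inl i)) * replicateRow Unit (fun j => m₂ (Sum.inl j))) := by
    ext i j
    simp [mul_apply, hM₁, hM₂, hμ₂, Finset.mul_sum, sub_eq_add_neg, ← Finset.sum_neg_distrib]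
    rw [Finset.sum_mul, Finset.sum_mul]
    exact Finset.sum_congr rfl fun x _ => by ring
  rw [h1, det_fromBlocks_one₂₂, h2, det_one_add_replicateCol_mul_replicateRow]
  simp [dotProduct, hμ₁, Finset.mul_sum, Finset.sum_mul]
  rw [← sub_eq_add_neg]
  congr 1
  exact Finset.sum_congr rfl fun x _ => by ring
end

section
/- Let M be the (k+l)×(k+l) block matrix M = [[0, M₁],[M₂, 0]] with (M₁)ᵢⱼ = m₁(i)m₂(k+j), (M₂)ᵢⱼ = m₁(k+i)m₂(j), μ₁ = Σ_{i=1}^{k} m₁(i)m₂(i), μ₂ = Σ_{i=k+1}^{k+l} m₁(i)m₂(i). If t ∈ ℂ satisfies μ₁μ₂t² ≠ 1, then (I + tM)⁻¹ = I − t(1 − μ₁μ₂t²)⁻¹M + t²(1 − μ₁μ₂t²)⁻¹M². -/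
open Matrix

theorem block_antidiagonal_inv (k l : ℕ) (m₁ m₂ : Fin k ⊕ Fin l → ℂ)
    (M₁ : Matrix (Fin k) (Fin l) ℂ) (hM₁ : ∀ i j, M₁ i j = m₁ (.inl i) * m₂ (.inr j))
    (M₂ : Matrix (Fin l) (Fin k) ℂ) (hM₂ : ∀ i j, M₂ i j = m₁ (.inr i) * m₂ (.inl j))
    (M : Matrix (Fin k ⊕ Fin l) (Fin k ⊕ Fin l) ℂ)
    (hM : M = Matrix.fromBlocks 0 M₁ M₂ 0)
    (μ₁ μ₂ : ℂ)
    (hμ₁ : μ₁ = ∑ i : Fin k, m₁ (.inl i) * m₂ (.inl i))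
    (hμ₂ : μ₂ = ∑ i : Fin l, m₁ (.inr i) * m₂ (.inr i))
    (t : ℂ) (ht : μ₁ * μ₂ * t ^ 2 ≠ 1) :
    (1 + t • M)⁻¹ =
      1 - (t * (1 - μ₁ * μ₂ * t ^ 2)⁻¹) • M
        + (t ^ 2 * (1 - μ₁ * μ₂ * t ^ 2)⁻¹) • (M ^ 2) := by
  have h12 : M₁ * M₂ = μ₂ • Matrix.of (fun i j => m₁ (.inl i) * m₂ (.inl j)) := by
    ext i j
    simp only [Matrix.mul_apply, hM₁, hM₂, Matrix.smul_apply, Matrix.of_apply, hμ₂,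
      smul_eq_mul, Finset.sum_mul, Finset.mul_sum]
    exact Finset.sum_congr rfl fun s _ => by ring
  have h21 : M₂ * M₁ = μ₁ • Matrix.of (fun i j => m₁ (.inr i) * m₂ (.inr j)) := by
    ext i j
    simp only [Matrix.mul_apply, hM₁, hM₂, Matrix.smul_apply, Matrix.of_apply, hμ₁,
      smul_eq_mul, Finset.sum_mul, Finset.mul_sum]
    exact Finset.sum_congr rfl fun s _ => by ring
  have h121 : M₁ * M₂ * M₁ = (μ₁ * μ₂) • M₁ := by
    rw [h12, Matrix.smul_mul]
    ext i j
    simp only [Matrix.smul_apply, Matrix.mul_apply, Matrix.of_apply, hM₁, smul_eq_mul, hμ₁,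
      Finset.sum_mul, Finset.mul_sum]
    exact Finset.sum_congr rfl fun s _ => by ring
  have h212 : M₂ * M₁ * M₂ = (μ₁ * μ₂) • M₂ := by
    rw [h21, Matrix.smul_mul]
    ext i j
    simp only [Matrix.smul_apply, Matrix.mul_apply, Matrix.of_apply, hM₂, smul_eq_mul, hμ₂,
      Finset.sum_mul, Finset.mul_sum]
    exact Finset.sum_congr rfl fun s _ => by ring
  have h3 : M * M * M = (μ₁ * μ₂) • M := by
    rw [hM, Matrix.fromBlocks_multiply, Matrix.fromBlocks_multiply]
    simp [h121, h212, Matrix.fromBlocks_smul]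
  have hd : (1 : ℂ) - μ₁ * μ₂ * t ^ 2 ≠ 0 := sub_ne_zero.mpr (Ne.symm ht)
  have hc : (1 - μ₁ * μ₂ * t ^ 2) * (1 - μ₁ * μ₂ * t ^ 2)⁻¹ = 1 := mul_inv_cancel₀ hd
  apply Matrix.inv_eq_right_inv
  set c : ℂ := (1 - μ₁ * μ₂ * t ^ 2)⁻¹ with hcdef
  have expand : (1 + t • M) * (1 - (t * c) • M + (t ^ 2 * c) • M ^ 2)
      = 1 + (t - t * c + t * (t ^ 2 * c) * (μ₁ * μ₂)) • M + (t ^ 2 * c - t * (t * c)) • M ^ 2 := by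
    have h3' : M * (M * M) = (μ₁ * μ₂) • M := by rw [← mul_assoc, h3]
    simp only [pow_two, mul_add, mul_sub, add_mul, sub_mul, one_mul, mul_one, smul_mul_assoc,
      mul_smul_comm, smul_smul, h3']
    module
  rw [expand]
  have e1 : t - t * c + t * (t ^ 2 * c) * (μ₁ * μ₂) = 0 := by
    rw [hcdef]
    linear_combination (-t) * mul_inv_cancel₀ hd
  have e2 : t ^ 2 * c - t * (t * c) = 0 := by ring
  rw [e1, e2, zero_smul, zero_smul, add_zero, add_zero]
end
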